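/- (Lemma 3) For any real γ, positive integer j₀, and Y > 2, |S(Y,1,γ)| + |S(Y,2,γ)| ≪ (log Y) ∑_{j=1}^{j₀} |∑_{1 ≤ n ≤ Y·2^{-j}} e(2^j γ n)| + Y·2^{-j₀} + log Y, with an absolute implied constant. -/

import Mathlib

open Complex Finset

/-- `e(x) = exp(2πix)`. -/
noncomputable def e (x : ℝ) : ℂ := Complex.exp (2 * Real.pi * Complex.I * x)

/-- `ε(n) = (-1)^(s₂ n)` where `s₂` is the binary digit sum. -/
def eps (n : ℕ) : ℤ := (-1) ^ ((Nat.digits 2 n).sum)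

/-- `S(Y,h,β) = ∑_{1 ≤ n ≤ Y} ε(n) ε(n+h) e(βn)`. -/
noncomputable def S (Y : ℝ) (h : ℕ) (β : ℝ) : ℂ :=
  ∑ n ∈ Finset.Icc 1 ⌊Y⌋₊, (eps n : ℂ) * (eps (n + h) : ℂ) * e (β * n)

noncomputable def Complex.abs : AbsoluteValue ℂ ℝ := NormedField.toAbsoluteValue ℂ
lemma Complex.abs_apply' (z : ℂ) : Complex.abs z = ‖z‖ := rfl

lemma e_zero : e 0 = 1 := by simp [e]
lemma e_add (x y : ℝ) : e (x + y) = e x * e y := by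
  rw [e, e, e, ← Complex.exp_add]; push_cast; ring_nf
lemma abs_e (x : ℝ) : Complex.abs (e x) = 1 := by
  rw [e, Complex.abs_apply', Complex.norm_exp,
    show 2 * ↑Real.pi * Complex.I * ↑x = (2 * Real.pi * x : ℝ) * Complex.I by push_cast; ring]
  simp

lemma eps_two_mul (m : ℕ) : eps (2 * m) = eps m := by
  rcases Nat.eq_zero_or_pos m with h | h
  · simp [h]
  · unfold eps
    rw [show 2 * m = (2 * m - 1) + 1 by omega, Nat.digits_add_two_add_one]
    rw [show 2 * m - 1 + 1 = 2 * m by omega]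
    simp [Nat.mul_div_cancel_left, Nat.mul_mod_right]

lemma eps_two_mul_add_one (m : ℕ) : eps (2 * m + 1) = - eps m := by
  unfold eps
  rw [Nat.digits_add_two_add_one]
  rw [show (2 * m + 1) % 2 = 1 by omega, show (2*m+1)/2 = m by omega]
  simp [pow_succ]; ring

lemma eps_mul_self (n : ℕ) : (eps n : ℂ) * (eps n : ℂ) = 1 := by
  unfold eps; push_cast
  rw [← pow_add, ← two_mul, pow_mul]
  norm_num

lemma abs_eps (n : ℕ) : Complex.abs ((eps n : ℂ)) = 1 := by
  unfold eps; push_cast; simp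

/-- `SN N h β` : the basic sum with integer cutoff. -/
noncomputable def SN (N : ℕ) (h : ℕ) (β : ℝ) : ℂ :=
  ∑ n ∈ Finset.Icc 1 N, (eps n : ℂ) * (eps (n + h) : ℂ) * e (β * n)

lemma S_eq_SN (Y : ℝ) (h : ℕ) (β : ℝ) : S Y h β = SN ⌊Y⌋₊ h β := rfl

lemma abs_SN_le (N h : ℕ) (β : ℝ) : Complex.abs (SN N h β) ≤ N := by
  refine (AbsoluteValue.sum_le _ _ _).trans ?_
  have : ∀ n ∈ Finset.Icc 1 N, Complex.abs ((eps n : ℂ) * (eps (n + h) : ℂ) * e (β * n)) = 1 := by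
    intro n _; rw [map_mul, map_mul, abs_eps, abs_eps, abs_e]; ring
  rw [Finset.sum_congr rfl this]
  simp [Nat.card_Icc]

lemma abs_SN_shift {M N : ℕ} (hMN : M ≤ N) (h : ℕ) (β : ℝ) :
    Complex.abs (SN N h β) ≤ Complex.abs (SN M h β) + (N - M : ℕ) := by
  have hsplit : SN N h β = SN M h β + ∑ n ∈ Finset.Ioc M N, (eps n : ℂ) * (eps (n + h) : ℂ) * e (β * n) := by
    unfold SN
    rw [show Finset.Icc 1 N = Finset.Ioc 0 N from Finset.Icc_add_one_left_eq_Ioc 0 N,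
      show Finset.Icc 1 M = Finset.Ioc 0 M from Finset.Icc_add_one_left_eq_Ioc 0 M]
    exact (Finset.sum_Ioc_consecutive _ (Nat.zero_le M) hMN).symm
  rw [hsplit]
  refine (Complex.abs.add_le _ _).trans ?_
  gcongr
  refine (AbsoluteValue.sum_le _ _ _).trans ?_
  have : ∀ n ∈ Finset.Ioc M N, Complex.abs ((eps n : ℂ) * (eps (n + h) : ℂ) * e (β * n)) = 1 := by
    intro n _; rw [map_mul, map_mul, abs_eps, abs_eps, abs_e]; ring
  rw [Finset.sum_congr rfl this]
  simp [Nat.card_Ioc]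

lemma sum_split (f : ℕ → ℂ) (N : ℕ) :
    ∑ n ∈ range N, f n = ∑ m ∈ range ((N + 1) / 2), f (2 * m) + ∑ m ∈ range (N / 2), f (2 * m + 1) := by
  induction N with
  | zero => simp
  | succ N ih =>
    rcases Nat.even_or_odd N with ⟨k, hk⟩ | ⟨k, hk⟩
    · subst hk
      rw [Finset.sum_range_succ, ih,
        show (k + k + 1 + 1) / 2 = (k + k + 1) / 2 + 1 by omega,
        show (k + k + 1) / 2 = k by omega, show (k + k) / 2 = k by omega,
        Finset.sum_range_succ, show 2 * k = k + k by omega]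
      ring
    · subst hk
      rw [Finset.sum_range_succ, ih,
        show (2 * k + 1 + 1 + 1) / 2 = k + 1 by omega,
        show (2 * k + 1 + 1) / 2 = k + 1 by omega, show (2 * k + 1) / 2 = k by omega,
        Finset.sum_range_succ, Finset.sum_range_succ]
      ring

lemma range_succ_eq (u : ℕ → ℂ) (K : ℕ) :
    ∑ i ∈ range (K + 1), u i = u 0 + ∑ n ∈ Finset.Icc 1 K, u n := by
  rw [Finset.sum_range_succ',
    show Finset.Icc 1 K = Finset.Ico 1 (K + 1) by rw [Finset.Ico_add_one_right_eq_Icc],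
    Finset.sum_Ico_eq_sum_range]
  simp only [Nat.add_sub_cancel]
  rw [add_comm]
  congr 1
  exact Finset.sum_congr rfl fun i _ => by rw [add_comm]

lemma abs_SN_shift' {M N : ℕ} (hMN : M ≤ N) (h : ℕ) (β : ℝ) :
    Complex.abs (SN M h β) ≤ Complex.abs (SN N h β) + (N - M : ℕ) := by
  have hsplit : SN N h β = SN M h β + ∑ n ∈ Finset.Ioc M N, (eps n : ℂ) * (eps (n + h) : ℂ) * e (β * n) := by
    unfold SN
    rw [show Finset.Icc 1 N = Finset.Ioc 0 N from Finset.Icc_add_one_left_eq_Ioc 0 N,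
      show Finset.Icc 1 M = Finset.Ioc 0 M from Finset.Icc_add_one_left_eq_Ioc 0 M]
    exact (Finset.sum_Ioc_consecutive _ (Nat.zero_le M) hMN).symm
  have htail : Complex.abs (∑ n ∈ Finset.Ioc M N, (eps n : ℂ) * (eps (n + h) : ℂ) * e (β * n)) ≤ (N - M : ℕ) := by
    refine (AbsoluteValue.sum_le _ _ _).trans ?_
    have : ∀ n ∈ Finset.Ioc M N, Complex.abs ((eps n : ℂ) * (eps (n + h) : ℂ) * e (β * n)) = 1 := by
      intro n _; rw [map_mul, map_mul, abs_eps, abs_eps, abs_e]; ring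
    rw [Finset.sum_congr rfl this]
    simp [Nat.card_Ioc]
  have : SN M h β = SN N h β - ∑ n ∈ Finset.Ioc M N, (eps n : ℂ) * (eps (n + h) : ℂ) * e (β * n) := by
    rw [hsplit]; ring
  rw [this, sub_eq_add_neg]
  refine (Complex.abs.add_le _ _).trans ?_
  rw [Complex.abs.map_neg]
  gcongr

lemma R1 (N : ℕ) (β : ℝ) :
    Complex.abs (SN N 1 β) ≤
      Complex.abs (∑ n ∈ Finset.Icc 1 (N / 2), e (2 * β * n)) +
        Complex.abs (SN (N / 2) 1 (2 * β)) + 8 := by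
  rcases Nat.eq_zero_or_pos N with h0 | hN
  · subst h0
    simp only [Nat.zero_div]
    have h1 : Complex.abs (SN 0 1 β) = 0 := by simp [SN]
    rw [h1]
    positivity
  set f : ℕ → ℂ := fun n => (eps n : ℂ) * (eps (n + 1) : ℂ) * e (β * n) with hf
  have h1 : ∑ i ∈ range (N + 1), f i = f 0 + SN N 1 β := range_succ_eq f N
  have hf0 : f 0 = -1 := by
    simp only [hf]
    norm_num [eps, e_zero]
  have heven : ∀ m : ℕ, f (2 * m) = -(e (2 * β * m)) := by
    intro m
    simp only [hf]
    rw [show β * ((2 * m : ℕ) : ℝ) = 2 * β * m by push_cast; ring]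
    rw [show ((eps (2 * m) : ℤ) : ℂ) = ((eps m : ℤ) : ℂ) by rw [eps_two_mul m],
      show ((eps (2 * m + 1) : ℤ) : ℂ) = -((eps m : ℤ) : ℂ) by rw [eps_two_mul_add_one m]; push_cast; ring]
    linear_combination (-(e (2 * β * m))) * eps_mul_self m
  have hodd : ∀ m : ℕ, f (2 * m + 1) = -(e β * ((eps m : ℂ) * (eps (m + 1) : ℂ) * e (2 * β * m))) := by
    intro m
    simp only [hf]
    rw [show β * ((2 * m + 1 : ℕ) : ℝ) = β + 2 * β * m by push_cast; ring, e_add]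
    rw [show 2 * m + 1 + 1 = 2 * (m + 1) by ring, eps_two_mul,
      show ((eps (2 * m + 1) : ℤ) : ℂ) = -((eps m : ℤ) : ℂ) by rw [eps_two_mul_add_one m]; push_cast; ring]
    ring
  have hsplit := sum_split f (N + 1)
  have hgeo : ∑ m ∈ range ((N + 1 + 1) / 2), f (2 * m) =
      -(1 + ∑ n ∈ Finset.Icc 1 (N / 2), e (2 * β * n)) := by
    rw [Finset.sum_congr rfl fun m _ => heven m, Finset.sum_neg_distrib]
    congr 1
    rw [show (N + 1 + 1) / 2 = N / 2 + 1 by omega,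
      range_succ_eq (fun m : ℕ => e (2 * β * m)) (N / 2)]
    norm_num [e_zero]
  have hg : ∑ m ∈ range ((N + 1) / 2), f (2 * m + 1) =
      -(e β * (-1 + SN ((N - 1) / 2) 1 (2 * β))) := by
    rw [Finset.sum_congr rfl fun m _ => hodd m, Finset.sum_neg_distrib, ← Finset.mul_sum]
    congr 2
    rw [show (N + 1) / 2 = (N - 1) / 2 + 1 by omega,
      range_succ_eq (fun m : ℕ => (eps m : ℂ) * (eps (m + 1) : ℂ) * e (2 * β * m)) ((N - 1) / 2)]
    congr 1
    norm_num [eps, e_zero]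
  have hid : SN N 1 β = -(∑ n ∈ Finset.Icc 1 (N / 2), e (2 * β * n)) -
      e β * SN ((N - 1) / 2) 1 (2 * β) + e β := by
    have := hsplit
    rw [h1, hgeo, hg, hf0] at this
    linear_combination this
  have hT : Complex.abs (SN ((N - 1) / 2) 1 (2 * β)) ≤ Complex.abs (SN (N / 2) 1 (2 * β)) + 1 := by
    have h2 : (N - 1) / 2 ≤ N / 2 := by omega
    refine (abs_SN_shift' h2 1 (2 * β)).trans ?_
    have : ((N / 2 - (N - 1) / 2 : ℕ) : ℝ) ≤ 1 := by
      have : N / 2 - (N - 1) / 2 ≤ 1 := by omega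
      exact_mod_cast Nat.cast_le.mpr this
    linarith
  calc Complex.abs (SN N 1 β)
      ≤ Complex.abs (-(∑ n ∈ Finset.Icc 1 (N / 2), e (2 * β * n)) - e β * SN ((N - 1) / 2) 1 (2 * β)) + Complex.abs (e β) := by
        rw [hid]; exact Complex.abs.add_le _ _
    _ ≤ Complex.abs (∑ n ∈ Finset.Icc 1 (N / 2), e (2 * β * n)) +
          Complex.abs (e β) * Complex.abs (SN ((N - 1) / 2) 1 (2 * β)) + Complex.abs (e β) := by
        have := Complex.abs.sub_le_add (-(∑ n ∈ Finset.Icc 1 (N / 2), e (2 * β * n))) (e β * SN ((N - 1) / 2) 1 (2 * β))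
        rw [Complex.abs.map_neg, Complex.abs.map_mul] at this
        linarith
    _ ≤ Complex.abs (∑ n ∈ Finset.Icc 1 (N / 2), e (2 * β * n)) + Complex.abs (SN (N / 2) 1 (2 * β)) + 8 := by
        rw [abs_e]
        linarith

lemma R2 (N : ℕ) (β : ℝ) :
    Complex.abs (SN N 2 β) ≤ 2 * Complex.abs (SN (N / 2) 1 (2 * β)) + 8 := by
  rcases Nat.eq_zero_or_pos N with h0 | hN
  · subst h0
    have h1 : Complex.abs (SN 0 2 β) = 0 := by simp [SN]
    rw [h1]
    positivity
  set f : ℕ → ℂ := fun n => (eps n : ℂ) * (eps (n + 2) : ℂ) * e (β * n) with hf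
  have h1 : ∑ i ∈ range (N + 1), f i = f 0 + SN N 2 β := range_succ_eq f N
  have hf0 : f 0 = -1 := by
    simp only [hf]
    norm_num [eps, e_zero]
  have heven : ∀ m : ℕ, f (2 * m) = (eps m : ℂ) * (eps (m + 1) : ℂ) * e (2 * β * m) := by
    intro m
    simp only [hf]
    rw [show β * ((2 * m : ℕ) : ℝ) = 2 * β * m by push_cast; ring]
    rw [show ((eps (2 * m) : ℤ) : ℂ) = ((eps m : ℤ) : ℂ) by rw [eps_two_mul m],
      show 2 * m + 2 = 2 * (m + 1) by ring,
      show ((eps (2 * (m + 1)) : ℤ) : ℂ) = ((eps (m + 1) : ℤ) : ℂ) by rw [eps_two_mul (m + 1)]]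
  have hodd : ∀ m : ℕ, f (2 * m + 1) = e β * ((eps m : ℂ) * (eps (m + 1) : ℂ) * e (2 * β * m)) := by
    intro m
    simp only [hf]
    rw [show β * ((2 * m + 1 : ℕ) : ℝ) = β + 2 * β * m by push_cast; ring, e_add]
    rw [show 2 * m + 1 + 2 = 2 * (m + 1) + 1 by ring,
      show ((eps (2 * m + 1) : ℤ) : ℂ) = -((eps m : ℤ) : ℂ) by rw [eps_two_mul_add_one m]; push_cast; ring,
      show ((eps (2 * (m + 1) + 1) : ℤ) : ℂ) = -((eps (m + 1) : ℤ) : ℂ) by rw [eps_two_mul_add_one (m + 1)]; push_cast; ring]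
    ring
  have hsplit := sum_split f (N + 1)
  have hA : ∑ m ∈ range ((N + 1 + 1) / 2), f (2 * m) = -1 + SN (N / 2) 1 (2 * β) := by
    rw [Finset.sum_congr rfl fun m _ => heven m,
      show (N + 1 + 1) / 2 = N / 2 + 1 by omega,
      range_succ_eq (fun m : ℕ => (eps m : ℂ) * (eps (m + 1) : ℂ) * e (2 * β * m)) (N / 2)]
    congr 1
    norm_num [eps, e_zero]
  have hB : ∑ m ∈ range ((N + 1) / 2), f (2 * m + 1) = e β * (-1 + SN ((N - 1) / 2) 1 (2 * β)) := by
    rw [Finset.sum_congr rfl fun m _ => hodd m, ← Finset.mul_sum]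
    congr 1
    rw [show (N + 1) / 2 = (N - 1) / 2 + 1 by omega,
      range_succ_eq (fun m : ℕ => (eps m : ℂ) * (eps (m + 1) : ℂ) * e (2 * β * m)) ((N - 1) / 2)]
    congr 1
    norm_num [eps, e_zero]
  have hid : SN N 2 β = SN (N / 2) 1 (2 * β) + e β * SN ((N - 1) / 2) 1 (2 * β) - e β := by
    have := hsplit
    rw [h1, hA, hB, hf0] at this
    linear_combination this
  have hT : Complex.abs (SN ((N - 1) / 2) 1 (2 * β)) ≤ Complex.abs (SN (N / 2) 1 (2 * β)) + 1 := by
    have h2 : (N - 1) / 2 ≤ N / 2 := by omega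
    refine (abs_SN_shift' h2 1 (2 * β)).trans ?_
    have : ((N / 2 - (N - 1) / 2 : ℕ) : ℝ) ≤ 1 := by
      have : N / 2 - (N - 1) / 2 ≤ 1 := by omega
      exact_mod_cast Nat.cast_le.mpr this
    linarith
  calc Complex.abs (SN N 2 β)
      ≤ Complex.abs (SN (N / 2) 1 (2 * β) + e β * SN ((N - 1) / 2) 1 (2 * β)) + Complex.abs (e β) := by
        rw [hid]
        have := Complex.abs.sub_le_add (SN (N / 2) 1 (2 * β) + e β * SN ((N - 1) / 2) 1 (2 * β)) (e β)
        linarith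
    _ ≤ Complex.abs (SN (N / 2) 1 (2 * β)) + Complex.abs (e β) * Complex.abs (SN ((N - 1) / 2) 1 (2 * β)) + Complex.abs (e β) := by
        have := Complex.abs.add_le (SN (N / 2) 1 (2 * β)) (e β * SN ((N - 1) / 2) 1 (2 * β))
        rw [Complex.abs.map_mul] at this
        linarith
    _ ≤ 2 * Complex.abs (SN (N / 2) 1 (2 * β)) + 8 := by
        rw [abs_e]
        linarith

lemma mainA (j₀ : ℕ) : ∀ (N : ℕ) (γ : ℝ),
    Complex.abs (SN N 1 γ) ≤
      (∑ j ∈ Finset.Icc 1 j₀, Complex.abs (∑ n ∈ Finset.Icc 1 (N / 2 ^ j), e (2 ^ j * γ * n)))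
        + ((N / 2 ^ j₀ : ℕ) : ℝ) + 8 * j₀ := by
  induction j₀ with
  | zero =>
    intro N γ
    simpa using abs_SN_le N 1 γ
  | succ j₀ ih =>
    intro N γ
    have step := R1 N γ
    have IH := ih (N / 2) (2 * γ)
    have hre : ∑ j ∈ Finset.Icc 1 j₀,
        Complex.abs (∑ n ∈ Finset.Icc 1 (N / 2 / 2 ^ j), e (2 ^ j * (2 * γ) * n)) =
        ∑ j ∈ Finset.Icc 2 (j₀ + 1),
          Complex.abs (∑ n ∈ Finset.Icc 1 (N / 2 ^ j), e (2 ^ j * γ * n)) := by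
      rw [show Finset.Icc 2 (j₀ + 1) = (Finset.Icc 1 j₀).map (addRightEmbedding 1) by
        rw [Finset.map_add_right_Icc], Finset.sum_map]
      refine Finset.sum_congr rfl fun j _ => ?_
      simp only [addRightEmbedding_apply]
      rw [show N / 2 ^ (j + 1) = N / 2 / 2 ^ j by
          rw [Nat.div_div_eq_div_mul, ← pow_succ'],
        show (2 : ℝ) ^ (j + 1) * γ = 2 ^ j * (2 * γ) by rw [pow_succ]; ring]
    have hsplitIcc : ∑ j ∈ Finset.Icc 1 (j₀ + 1),
        Complex.abs (∑ n ∈ Finset.Icc 1 (N / 2 ^ j), e (2 ^ j * γ * n)) =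
        Complex.abs (∑ n ∈ Finset.Icc 1 (N / 2), e (2 * γ * n)) +
        ∑ j ∈ Finset.Icc 2 (j₀ + 1),
          Complex.abs (∑ n ∈ Finset.Icc 1 (N / 2 ^ j), e (2 ^ j * γ * n)) := by
      rw [← Finset.Ioc_insert_left (by omega : (1:ℕ) ≤ j₀ + 1),
        Finset.sum_insert (by simp), show Finset.Icc 2 (j₀ + 1) = Finset.Ioc 1 (j₀ + 1) from Finset.Icc_add_one_left_eq_Ioc 1 _]
      norm_num [show Finset.Icc 1 (N / 2) = Finset.Ioc 0 (N / 2) from Finset.Icc_add_one_left_eq_Ioc 0 _,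
        show Finset.Icc 2 (j₀ + 1) = Finset.Ioc 1 (j₀ + 1) from Finset.Icc_add_one_left_eq_Ioc 1 _]
    have hdiv : N / 2 / 2 ^ j₀ = N / 2 ^ (j₀ + 1) := by
      rw [Nat.div_div_eq_div_mul, ← pow_succ']
    rw [hre, hdiv] at IH
    rw [hsplitIcc]
    push_cast
    linarith

lemma mainT (k : ℕ) (N : ℕ) (γ : ℝ) :
    Complex.abs (SN N 1 γ) + Complex.abs (SN N 2 γ) ≤
      3 * (∑ j ∈ Finset.Icc 1 (k + 1),
          Complex.abs (∑ n ∈ Finset.Icc 1 (N / 2 ^ j), e (2 ^ j * γ * n)))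
        + 3 * ((N / 2 ^ (k + 1) : ℕ) : ℝ) + 32 * (k + 1) := by
  have h1 := mainA (k + 1) N γ
  have h2 := R2 N γ
  have h3 := mainA k (N / 2) (2 * γ)
  have hre : ∑ j ∈ Finset.Icc 1 k,
      Complex.abs (∑ n ∈ Finset.Icc 1 (N / 2 / 2 ^ j), e (2 ^ j * (2 * γ) * n)) =
      ∑ j ∈ Finset.Icc 2 (k + 1),
        Complex.abs (∑ n ∈ Finset.Icc 1 (N / 2 ^ j), e (2 ^ j * γ * n)) := by
    rw [show Finset.Icc 2 (k + 1) = (Finset.Icc 1 k).map (addRightEmbedding 1) by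
      rw [Finset.map_add_right_Icc], Finset.sum_map]
    refine Finset.sum_congr rfl fun j _ => ?_
    simp only [addRightEmbedding_apply]
    rw [show N / 2 ^ (j + 1) = N / 2 / 2 ^ j by
        rw [Nat.div_div_eq_div_mul, ← pow_succ'],
      show (2 : ℝ) ^ (j + 1) * γ = 2 ^ j * (2 * γ) by rw [pow_succ]; ring]
  have hdiv : N / 2 / 2 ^ k = N / 2 ^ (k + 1) := by
    rw [Nat.div_div_eq_div_mul, ← pow_succ']
  rw [hre, hdiv] at h3
  have hsub : ∑ j ∈ Finset.Icc 2 (k + 1),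
      Complex.abs (∑ n ∈ Finset.Icc 1 (N / 2 ^ j), e (2 ^ j * γ * n)) ≤
      ∑ j ∈ Finset.Icc 1 (k + 1),
        Complex.abs (∑ n ∈ Finset.Icc 1 (N / 2 ^ j), e (2 ^ j * γ * n)) := by
    refine Finset.sum_le_sum_of_subset_of_nonneg
      (Finset.Icc_subset_Icc_left (by omega)) fun _ _ _ => AbsoluteValue.nonneg _ _
  push_cast at h1 h3 ⊢
  linarith

theorem lemma_three : ∃ C : ℝ, ∀ (γ : ℝ) (j₀ : ℕ) (Y : ℝ), 0 < j₀ → 2 < Y →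
    ‖S Y 1 γ‖ + ‖S Y 2 γ‖ ≤
      C * (Real.log Y * ∑ j ∈ Finset.Icc 1 j₀,
            ‖∑ n ∈ Finset.Icc 1 ⌊Y / 2 ^ j⌋₊, e (2 ^ j * γ * n)‖ +
          Y / 2 ^ j₀ + Real.log Y) := by
  simp only [← Complex.abs_apply']
  refine ⟨100 / Real.log 2, ?_⟩
  intro γ j₀ Y hj hY
  set N := ⌊Y⌋₊ with hNdef
  have hN2 : 2 ≤ N := Nat.le_floor (by exact_mod_cast hY.le)
  have hNY : (N : ℝ) ≤ Y := Nat.floor_le (by linarith)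
  have hfloor : ∀ j : ℕ, ⌊Y / 2 ^ j⌋₊ = N / 2 ^ j := by
    intro j
    rw [show (2 : ℝ) ^ j = ((2 ^ j : ℕ) : ℝ) by push_cast; ring, Nat.floor_div_natCast]
  set G : ℕ → ℝ := fun j => Complex.abs (∑ n ∈ Finset.Icc 1 (N / 2 ^ j), e (2 ^ j * γ * n))
    with hG
  have hstatement_sum :
      ∑ j ∈ Finset.Icc 1 j₀, Complex.abs (∑ n ∈ Finset.Icc 1 ⌊Y / 2 ^ j⌋₊, e (2 ^ j * γ * n)) =
      ∑ j ∈ Finset.Icc 1 j₀, G j :=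
    Finset.sum_congr rfl fun j _ => by rw [hfloor j]
  set L : ℕ := Nat.log 2 N + 1 with hL
  set j₁ : ℕ := min j₀ L with hj₁
  have hj₁pos : 1 ≤ j₁ := le_min hj (by omega)
  obtain ⟨k, hk⟩ : ∃ k, j₁ = k + 1 := ⟨j₁ - 1, by omega⟩
  have hmain := mainT k N γ
  rw [← hk] at hmain
  rw [S_eq_SN, S_eq_SN, ← hNdef, hstatement_sum]
  have hSsub : ∑ j ∈ Finset.Icc 1 j₁, G j ≤ ∑ j ∈ Finset.Icc 1 j₀, G j :=
    Finset.sum_le_sum_of_subset_of_nonneg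
      (Finset.Icc_subset_Icc_right (min_le_left _ _))
      (fun _ _ _ => AbsoluteValue.nonneg _ _)
  have hSnonneg : 0 ≤ ∑ j ∈ Finset.Icc 1 j₀, G j :=
    Finset.sum_nonneg fun _ _ => AbsoluteValue.nonneg _ _
  have hlog2pos : 0 < Real.log 2 := Real.log_pos (by norm_num)
  have hlog2lt : Real.log 2 < 1 := by
    have := Real.log_two_lt_d9
    linarith
  have hlogY : Real.log 2 ≤ Real.log Y := Real.log_le_log (by norm_num) (by linarith)
  have hlogYpos : 0 < Real.log Y := lt_of_lt_of_le hlog2pos hlogY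
  have hYdivnonneg : 0 ≤ Y / 2 ^ j₀ := by positivity
  have hdivterm : ((N / 2 ^ j₁ : ℕ) : ℝ) ≤ Y / 2 ^ j₀ := by
    rcases le_or_gt j₀ L with hcase | hcase
    · rw [show j₁ = j₀ from min_eq_left hcase]
      have h1 : ((N / 2 ^ j₀ : ℕ) : ℝ) ≤ (N : ℝ) / ((2 ^ j₀ : ℕ) : ℝ) := Nat.cast_div_le
      refine h1.trans ?_
      rw [show ((2 ^ j₀ : ℕ) : ℝ) = (2 : ℝ) ^ j₀ by push_cast; ring]
      gcongr
    · rw [show j₁ = L from min_eq_right hcase.le,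
        Nat.div_eq_of_lt (Nat.lt_pow_succ_log_self (by norm_num) N)]
      simpa using hYdivnonneg
  have hjlog : (j₁ : ℝ) ≤ 2 * Real.log Y / Real.log 2 := by
    have h1 : (j₁ : ℝ) ≤ (L : ℝ) := by exact_mod_cast min_le_right j₀ L
    have h2 : (Nat.log 2 N : ℝ) * Real.log 2 ≤ Real.log Y := by
      have hp : (2 : ℝ) ^ (Nat.log 2 N) ≤ (N : ℝ) := by
        exact_mod_cast Nat.pow_log_le_self 2 (by omega)
      have := Real.log_le_log (by positivity) (hp.trans hNY)
      rwa [Real.log_pow] at this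
    have h3 : (Nat.log 2 N : ℝ) ≤ Real.log Y / Real.log 2 := by
      rw [le_div_iff₀ hlog2pos]; linarith
    have h4 : (1 : ℝ) ≤ Real.log Y / Real.log 2 := by
      rw [le_div_iff₀ hlog2pos]; linarith
    have h5 : (L : ℝ) = (Nat.log 2 N : ℝ) + 1 := by push_cast [hL]; ring
    rw [h5] at h1
    have : 2 * Real.log Y / Real.log 2 = Real.log Y / Real.log 2 + Real.log Y / Real.log 2 := by
      ring
    linarith
  have hA : 3 * (∑ j ∈ Finset.Icc 1 j₁, G j) ≤
      100 / Real.log 2 * Real.log Y * (∑ j ∈ Finset.Icc 1 j₀, G j) := by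
    have hCY : (3 : ℝ) ≤ 100 / Real.log 2 * Real.log Y := by
      rw [div_mul_eq_mul_div, le_div_iff₀ hlog2pos]
      nlinarith
    nlinarith
  have hB : 3 * ((N / 2 ^ j₁ : ℕ) : ℝ) ≤ 100 / Real.log 2 * (Y / 2 ^ j₀) := by
    have hC3 : (3 : ℝ) ≤ 100 / Real.log 2 := by
      rw [le_div_iff₀ hlog2pos]; linarith
    nlinarith [(Nat.cast_nonneg (N / 2 ^ j₁) : (0:ℝ) ≤ ((N / 2 ^ j₁ : ℕ) : ℝ))]
  have hCj : 32 * (j₁ : ℝ) ≤ 100 / Real.log 2 * Real.log Y := by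
    have hj2 : (j₁ : ℝ) * Real.log 2 ≤ 2 * Real.log Y := by
      have := mul_le_mul_of_nonneg_right hjlog hlog2pos.le
      rwa [div_mul_cancel₀ _ (ne_of_gt hlog2pos)] at this
    rw [div_mul_eq_mul_div, le_div_iff₀ hlog2pos]
    nlinarith
  have hkcast : ((k : ℝ) + 1) = (j₁ : ℝ) := by rw [hk]; push_cast; ring
  rw [hkcast] at hmain
  simp only [hG] at hSsub hSnonneg hA ⊢
  linarith
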